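/- arXiv:0810.2311 — 3 statements merged into one kernel-verified Lean document; each statement's English description precedes it below -/
import Mathlib

section
/- If a symmetric non-negative matrix A ∈ ℝ^{N×N} is diagonally dominant (a_{ii} ≥ Σ_{j≠i} a_{ij} for all i), then A is completely positive, i.e., there exists a non-negative matrix B ∈ ℝ₊^{N×k} for some k with A = B·Bᵀ. -/
open Finset in
/-- A symmetric non-negative diagonally dominant matrix is completely positive. -/
theorem diagonally_dominant_is_completely_positive (N : ℕ)
    (A : Matrix (Fin N) (Fin N) ℝ) (hsymm : A.IsSymm)
    (hnonneg : ∀ i j, 0 ≤ A i j)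
    (hdd : ∀ i, ∑ j ∈ Finset.univ.erase i, A i j ≤ A i i) :
    ∃ (k : ℕ) (B : Matrix (Fin N) (Fin k) ℝ),
      (∀ i j, 0 ≤ B i j) ∧ A = B * B.transpose := by
  classical
  have hsym : ∀ p q, A p q = A q p := by
    intro p q
    have := congrFun (congrFun hsymm q) p
    simpa [Matrix.transpose_apply] using this
  set D : Fin N → ℝ := fun i => A i i - ∑ j ∈ Finset.univ.erase i, A i j with hDdef
  have hDnn : ∀ i, 0 ≤ D i := fun i => sub_nonneg.2 (hdd i)
  set C : Matrix (Fin N) (Fin N ⊕ Fin N × Fin N) ℝ := fun i s =>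
    Sum.casesOn s
      (fun p => if i = p then Real.sqrt (D i) else 0)
      (fun pq => if pq.1 < pq.2 ∧ (i = pq.1 ∨ i = pq.2) then Real.sqrt (A pq.1 pq.2) else 0)
    with hCdef
  let e : (Fin N ⊕ Fin N × Fin N) ≃ Fin (N + N * N) :=
    ((Equiv.refl (Fin N)).sumCongr finProdFinEquiv).trans finSumFinEquiv
  have hCnn : ∀ i s, 0 ≤ C i s := by
    rintro i (p | pq) <;> simp only [hCdef] <;> split_ifs <;> simp [Real.sqrt_nonneg]
  refine ⟨N + N * N, fun i c => C i (e.symm c), fun i c => hCnn i _, ?_⟩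
  refine Matrix.ext fun i j => ?_
  change A i j = ∑ c, C i (e.symm c) * C j (e.symm c)
  rw [Equiv.sum_comp e.symm (fun s => C i s * C j s)]
  rw [Fintype.sum_sum_type]
  -- the diagonal (inl) part
  have hdiag : ∑ p, C i (Sum.inl p) * C j (Sum.inl p)
      = if i = j then D i else 0 := by
    rcases eq_or_ne i j with hij | hij
    · rw [← hij, if_pos rfl, Finset.sum_eq_single i]
      · simp only [hCdef]
        simp [Real.mul_self_sqrt (hDnn i)]
      · intro b _ hb
        simp only [hCdef]
        simp [Ne.symm hb]
      · simp
    · rw [if_neg hij]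
      apply Finset.sum_eq_zero
      intro p _
      simp only [hCdef]
      split_ifs with h1 h2 h2 <;> try ring
      exact absurd (h1.trans h2.symm) hij
  -- the pair (inr) part, squares resolved pointwise
  have hmul : ∀ p q : Fin N, C i (Sum.inr (p, q)) * C j (Sum.inr (p, q))
      = if p < q ∧ (i = p ∨ i = q) ∧ (j = p ∨ j = q) then A p q else 0 := by
    intro p q
    simp only [hCdef]
    split_ifs with h1 h2 h3 <;>
      first
        | exact Real.mul_self_sqrt (hnonneg _ _)
        | tauto
        | ring
  have hpair : ∑ pq : Fin N × Fin N, C i (Sum.inr pq) * C j (Sum.inr pq)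
      = if i = j then ∑ l ∈ Finset.univ.erase i, A i l else A i j := by
    rw [Fintype.sum_prod_type]
    simp only [hmul]
    rcases eq_or_ne i j with hij | hij
    · rw [← hij, if_pos rfl]
      have key : ∀ p q : Fin N,
          (if p < q ∧ (i = p ∨ i = q) ∧ (i = p ∨ i = q) then A p q else 0)
          = (if p = i then (if i < q then A i q else 0) else 0)
            + (if q = i then (if p < i then A i p else 0) else 0) := by
        intro p q
        rcases eq_or_ne p i with hp | hp <;> rcases eq_or_ne q i with hq | hq
        · subst hp; subst hq; simp [lt_irrefl]
        · subst hp
          rw [if_pos rfl, if_neg hq]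
          by_cases h : p < q
          · rw [if_pos ⟨h, Or.inl rfl, Or.inl rfl⟩, if_pos h]; ring
          · rw [if_neg (by tauto), if_neg h]; ring
        · subst hq
          rw [if_neg hp, if_pos rfl]
          by_cases h : p < q
          · rw [if_pos ⟨h, Or.inr rfl, Or.inr rfl⟩, if_pos h, hsym]; ring
          · rw [if_neg (by tauto), if_neg h]; ring
        · rw [if_neg hp, if_neg hq, if_neg]
          · ring
          rintro ⟨-, hi | hi, -⟩
          exacts [hp hi.symm, hq hi.symm]
      calc ∑ p, ∑ q, (if p < q ∧ (i = p ∨ i = q) ∧ (i = p ∨ i = q) then A p q else 0)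
          = ∑ p, ∑ q, ((if p = i then (if i < q then A i q else 0) else 0)
            + (if q = i then (if p < i then A i p else 0) else 0)) :=
            Finset.sum_congr rfl fun p _ => Finset.sum_congr rfl fun q _ => key p q
        _ = (∑ q, if i < q then A i q else 0) + (∑ p, if p < i then A i p else 0) := by
            simp [Finset.sum_add_distrib, Finset.sum_ite_eq']
        _ = ∑ l, ((if i < l then A i l else 0) + (if l < i then A i l else 0)) := by
            rw [Finset.sum_add_distrib]
        _ = ∑ l ∈ Finset.univ.erase i,
              ((if i < l then A i l else 0) + (if l < i then A i l else 0)) := by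
            rw [Finset.sum_erase _ (by simp)]
        _ = ∑ l ∈ Finset.univ.erase i, A i l := by
            refine Finset.sum_congr rfl fun l hl => ?_
            rcases lt_or_gt_of_ne (Finset.ne_of_mem_erase hl) with h | h
            · rw [if_neg (asymm h), if_pos h]; ring
            · rw [if_pos h, if_neg (asymm h)]; ring
    · rw [if_neg hij]
      have key2 : ∀ p q : Fin N,
          (if p < q ∧ (i = p ∨ i = q) ∧ (j = p ∨ j = q) then A p q else 0)
          = (if p = i ∧ q = j then (if i < j then A i j else 0) else 0)
            + (if p = j ∧ q = i then (if j < i then A i j else 0) else 0) := by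
        intro p q
        by_cases h1 : p = i ∧ q = j
        · obtain ⟨hp, hq⟩ := h1
          subst hp; subst hq
          by_cases h : p < q
          · rw [if_pos ⟨h, Or.inl rfl, Or.inr rfl⟩,
              if_pos (show p = p ∧ q = q from ⟨rfl, rfl⟩), if_pos h,
              if_neg (show ¬(p = q ∧ q = p) from fun hh => hij hh.1)]
            ring
          · rw [if_neg (show ¬(p < q ∧ _ ∧ _) from fun hh => h hh.1),
              if_pos (show p = p ∧ q = q from ⟨rfl, rfl⟩), if_neg h,
              if_neg (show ¬(p = q ∧ q = p) from fun hh => hij hh.1)]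
            ring
        · by_cases h2 : p = j ∧ q = i
          · obtain ⟨hp, hq⟩ := h2
            subst hp; subst hq
            by_cases h : p < q
            · rw [if_pos ⟨h, Or.inr rfl, Or.inl rfl⟩,
                if_neg (show ¬(p = q ∧ q = p) from fun hh => hij hh.2),
                if_pos (show p = p ∧ q = q from ⟨rfl, rfl⟩), if_pos h, hsym p q]
              ring
            · rw [if_neg (show ¬(p < q ∧ _ ∧ _) from fun hh => h hh.1),
                if_neg (show ¬(p = q ∧ q = p) from fun hh => hij hh.2),
                if_pos (show p = p ∧ q = q from ⟨rfl, rfl⟩), if_neg h]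
              ring
          · rw [if_neg h1, if_neg h2, if_neg]
            · ring
            rintro ⟨-, hi | hi, hj | hj⟩
            · exact hij (hi.trans hj.symm)
            · exact h1 ⟨hi.symm, hj.symm⟩
            · exact h2 ⟨hj.symm, hi.symm⟩
            · exact hij (hi.trans hj.symm)
      calc ∑ p, ∑ q, (if p < q ∧ (i = p ∨ i = q) ∧ (j = p ∨ j = q) then A p q else 0)
          = ∑ p, ∑ q, ((if p = i ∧ q = j then (if i < j then A i j else 0) else 0)
            + (if p = j ∧ q = i then (if j < i then A i j else 0) else 0)) :=
            Finset.sum_congr rfl fun p _ => Finset.sum_congr rfl fun q _ => key2 p q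
        _ = (if i < j then A i j else 0) + (if j < i then A i j else 0) := by
            simp [Finset.sum_add_distrib, ite_and, Finset.sum_ite_eq']
        _ = A i j := by
            rcases lt_trichotomy i j with h | h | h
            · rw [if_pos h, if_neg (asymm h)]; ring
            · exact absurd h hij
            · rw [if_neg (asymm h), if_pos h]; ring
  rw [hdiag, hpair]
  rcases eq_or_ne i j with hij | hij
  · rw [← hij, if_pos rfl, if_pos rfl]
    simp only [hDdef]
    ring
  · simp [hij]
end

section
/- If the 3×3 matrix [[1, w, h],[w, t₁, v],[h, v, t₂]] is positive semidefinite with t₁ = w² and t₂ = h², then v = w·h. -/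
/-- If `[[1,w,h],[w,w²,v],[h,v,h²]]` is PSD then `v = w h`. -/
theorem psd_equality_case (w h v t₁ t₂ : ℝ)
    (hpsd : (Matrix.of ![![1, w, h], ![w, t₁, v], ![h, v, t₂]] :
      Matrix (Fin 3) (Fin 3) ℝ).PosSemidef)
    (ht₁ : t₁ = w ^ 2) (ht₂ : t₂ = h ^ 2) :
    v = w * h := by
  have h1 := hpsd.dotProduct_mulVec_nonneg ![-w - h, 1, 1]
  have h2 := hpsd.dotProduct_mulVec_nonneg ![-w + h, 1, -1]
  simp [dotProduct, Matrix.mulVec, Fin.sum_univ_succ] at h1 h2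
  nlinarith [h1, h2]
end

section
/- The function g(x̃, ỹ) = Σ_i Σ_j c_{ij} · (Σ_l exp(x̃_{il} + ỹ_{lj})) with c_{ij} ≥ 0 is convex in (x̃, ỹ), and hence ‖V − WH‖₂² under the substitution W_{il} = exp(x̃_{il}), H_{lj} = exp(ỹ_{lj}) is a difference of two convex functions f − g plus a constant. -/
lemma myConvexOn_sum {ι E : Type*} [AddCommGroup E] [Module ℝ E] (t : Finset ι)
    (f : ι → E → ℝ) (h : ∀ i ∈ t, ConvexOn ℝ Set.univ (f i)) :
    ConvexOn ℝ Set.univ (fun x => ∑ i ∈ t, f i x) := by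
  classical
  induction t using Finset.cons_induction with
  | empty => simpa using convexOn_const 0 convex_univ
  | cons a s ha ih =>
      simp only [Finset.sum_cons]
      exact (h a (Finset.mem_cons_self a s)).add
        (ih fun i hi => h i (Finset.mem_cons_of_mem hi))

/-- `g(x̃, ỹ) = Σᵢⱼ cᵢⱼ Σₗ exp(x̃ᵢₗ + ỹₗⱼ)` with `cᵢⱼ ≥ 0` is convex, and the NMF
objective under the exponential substitution is a constant plus `f - g`. -/
theorem posynomial_linear_convex_and_dc (N m k : ℕ)
    (V : Matrix (Fin N) (Fin m) ℝ) (hV : ∀ i j, 0 ≤ V i j) :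
    ConvexOn ℝ Set.univ
      (fun p : Matrix (Fin N) (Fin k) ℝ × Matrix (Fin k) (Fin m) ℝ =>
        2 * ∑ i, ∑ j, V i j * (∑ l, Real.exp (p.1 i l + p.2 l j))) ∧
    (∀ p : Matrix (Fin N) (Fin k) ℝ × Matrix (Fin k) (Fin m) ℝ,
      ∑ i, ∑ j, (V i j - ∑ l, Real.exp (p.1 i l + p.2 l j)) ^ 2 =
        (∑ i, ∑ j, (V i j) ^ 2) +
        (∑ i, ∑ j, (∑ l, Real.exp (p.1 i l + p.2 l j)) ^ 2) -
        2 * ∑ i, ∑ j, V i j * (∑ l, Real.exp (p.1 i l + p.2 l j))) := by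
  constructor
  · have hterm : ∀ (i : Fin N) (l : Fin k) (j : Fin m),
        ConvexOn ℝ Set.univ
          (fun p : Matrix (Fin N) (Fin k) ℝ × Matrix (Fin k) (Fin m) ℝ =>
            Real.exp (p.1 i l + p.2 l j)) := by
      intro i l j
      have hL : ConvexOn ℝ Set.univ
          ((fun x : ℝ => Real.exp x) ∘
            ({ toFun := fun p : Matrix (Fin N) (Fin k) ℝ × Matrix (Fin k) (Fin m) ℝ =>
                 p.1 i l + p.2 l j,
               map_add' := by intro p q; simp [Matrix.add_apply]; ring,
               map_smul' := by intro c p; simp [Matrix.smul_apply]; ring } :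
              (Matrix (Fin N) (Fin k) ℝ × Matrix (Fin k) (Fin m) ℝ) →ₗ[ℝ] ℝ).toAffineMap) := by
        have := convexOn_exp.comp_affineMap
          (({ toFun := fun p : Matrix (Fin N) (Fin k) ℝ × Matrix (Fin k) (Fin m) ℝ =>
                 p.1 i l + p.2 l j,
               map_add' := by intro p q; simp [Matrix.add_apply]; ring,
               map_smul' := by intro c p; simp [Matrix.smul_apply]; ring } :
              (Matrix (Fin N) (Fin k) ℝ × Matrix (Fin k) (Fin m) ℝ) →ₗ[ℝ] ℝ).toAffineMap)
        simpa using this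
      simpa [Function.comp_def] using hL
    have h1 : ConvexOn ℝ Set.univ
        (fun p : Matrix (Fin N) (Fin k) ℝ × Matrix (Fin k) (Fin m) ℝ =>
          ∑ i, ∑ j, V i j * (∑ l, Real.exp (p.1 i l + p.2 l j))) := by
      apply myConvexOn_sum
      intro i _
      apply myConvexOn_sum
      intro j _
      exact (myConvexOn_sum Finset.univ _ (fun l _ => hterm i l j)).smul (hV i j)
    simpa [two_smul, mul_comm, mul_left_comm] using h1.smul (by norm_num : (0:ℝ) ≤ 2)
  · intro p
    rw [Finset.mul_sum, ← Finset.sum_add_distrib, ← Finset.sum_sub_distrib]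
    refine Finset.sum_congr rfl fun i _ => ?_
    rw [Finset.mul_sum, ← Finset.sum_add_distrib, ← Finset.sum_sub_distrib]
    exact Finset.sum_congr rfl fun j _ => by ring
end
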